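/- Let V and W be forms (homogeneous polynomials) on ℝⁿ, of possibly different degrees. If W is positive definite, and the function x ↦ ⟨∇W(x), ∇V(x)⟩ is positive definite (i.e., positive for all x ≠ 0), then V is positive definite. -/

import Mathlib

open MvPolynomial

private noncomputable def gradCLM (n : ℕ) (p : MvPolynomial (Fin n) ℝ) (x : Fin n → ℝ) :
    (Fin n → ℝ) →L[ℝ] ℝ :=
  ∑ i : Fin n, eval x (pderiv i p) • ContinuousLinearMap.proj i

private lemma gradCLM_apply (n : ℕ) (p : MvPolynomial (Fin n) ℝ) (x v : Fin n → ℝ) :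
    gradCLM n p x v = ∑ i : Fin n, eval x (pderiv i p) * v i := by
  simp [gradCLM]

private lemma hasStrictFDerivAt_eval (n : ℕ) (p : MvPolynomial (Fin n) ℝ) (x : Fin n → ℝ) :
    HasStrictFDerivAt (fun y : Fin n → ℝ => eval y p) (gradCLM n p x) x := by
  induction p using MvPolynomial.induction_on generalizing x with
  | C a =>
      have : gradCLM n (C a : MvPolynomial (Fin n) ℝ) x = 0 := by
        simp [gradCLM, pderiv_C]
      rw [this]
      simpa [eval_C] using hasStrictFDerivAt_const a x
  | add p q hp hq =>
      have : gradCLM n (p + q) x = gradCLM n p x + gradCLM n q x := by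
        simp [gradCLM, add_smul, Finset.sum_add_distrib]
      rw [this]
      simpa [eval_add, Pi.add_def] using (hp x).add (hq x)
  | mul_X p i hp =>
      have h1 : HasStrictFDerivAt (fun y : Fin n → ℝ => eval y p * y i)
          (eval x p • ContinuousLinearMap.proj i + x i • gradCLM n p x) x := by
        have hi : HasStrictFDerivAt (fun y : Fin n → ℝ => y i)
            (ContinuousLinearMap.proj (R := ℝ) (φ := fun _ : Fin n => ℝ) i) x :=
          (ContinuousLinearMap.proj (R := ℝ) (φ := fun _ : Fin n => ℝ) i).hasStrictFDerivAt
        exact (hp x).mul hi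
      have heq : gradCLM n (p * X i) x
          = eval x p • ContinuousLinearMap.proj i + x i • gradCLM n p x := by
        refine ContinuousLinearMap.ext fun v => ?_
        simp only [ContinuousLinearMap.add_apply, ContinuousLinearMap.smul_apply,
          ContinuousLinearMap.proj_apply, gradCLM_apply, smul_eq_mul, Finset.mul_sum]
        simp only [pderiv_mul, pderiv_X, eval_add, eval_mul, eval_X, Pi.single_apply,
          apply_ite (eval x), map_one, map_zero, add_mul, Finset.sum_add_distrib,
          ite_mul, one_mul, zero_mul, mul_ite, mul_one, mul_zero]
        rw [Finset.sum_ite_eq Finset.univ i (fun j => eval x p * v j)]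
        simp [mul_comm, mul_left_comm, mul_assoc]
        exact add_comm _ _
      rw [heq]
      simpa [eval_mul, eval_X] using h1

private lemma eval_smul_homog {n : ℕ} {p : MvPolynomial (Fin n) ℝ} {d : ℕ}
    (hp : p.IsHomogeneous d) (t : ℝ) (x : Fin n → ℝ) :
    eval (t • x) p = t ^ d * eval x p := by
  rw [eval_eq', eval_eq', Finset.mul_sum]
  refine Finset.sum_congr rfl fun s hs => ?_
  have hdeg : ∑ i : Fin n, s i = d := by
    have h := hp (mem_support_iff.mp hs)
    rw [← h]
    rw [Finsupp.weight_apply, Finsupp.sum]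
    rw [Finset.sum_subset (Finset.subset_univ s.support)]
    · simp
    · intro i _ hi
      simp [Finsupp.notMem_support_iff.mp hi]
  have : ∏ i : Fin n, (t • x) i ^ s i = t ^ d * ∏ i : Fin n, x i ^ s i := by
    simp only [Pi.smul_apply, smul_eq_mul, mul_pow]
    rw [Finset.prod_mul_distrib, Finset.prod_pow_eq_pow_sum, hdeg]
  rw [this]; ring

private lemma euler_identity {n : ℕ} {p : MvPolynomial (Fin n) ℝ} {d : ℕ}
    (hp : p.IsHomogeneous d) (x : Fin n → ℝ) :
    ∑ i : Fin n, eval x (pderiv i p) * x i = d * eval x p := by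
  have h1 : HasDerivAt (fun t : ℝ => eval (t • x) p) (gradCLM n p x x) 1 := by
    have hg : HasDerivAt (fun t : ℝ => t • x) x 1 := by
      simpa using (hasDerivAt_id (1:ℝ)).smul_const x
    have hf := (hasStrictFDerivAt_eval n p ((1:ℝ) • x)).hasFDerivAt
    simpa [one_smul, Function.comp_def] using hf.comp_hasDerivAt 1 hg
  have h2 : HasDerivAt (fun t : ℝ => eval (t • x) p) (d * eval x p) 1 := by
    have : (fun t : ℝ => eval (t • x) p) = fun t : ℝ => t ^ d * eval x p := by
      funext t; exact eval_smul_homog hp t x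
    rw [this]
    simpa using (hasDerivAt_pow d (1:ℝ)).mul_const (eval x p)
  have := h1.unique h2
  rw [gradCLM_apply] at this
  exact this

private lemma pderiv_eval_eq_zero_of_homog_zero {n : ℕ} {p : MvPolynomial (Fin n) ℝ}
    (hp : p.IsHomogeneous 0) (x : Fin n → ℝ) (i : Fin n) :
    eval x (pderiv i p) = 0 := by
  have hconst : (fun y : Fin n → ℝ => eval y p) = fun _ => eval 0 p := by
    funext y
    have := eval_smul_homog hp 0 y
    simpa using this.symm
  have h1 := (hasStrictFDerivAt_eval n p x).hasFDerivAt
  rw [hconst] at h1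
  have h2 : HasFDerivAt (fun _ : Fin n → ℝ => eval 0 p) (0 : (Fin n → ℝ) →L[ℝ] ℝ) x :=
    hasFDerivAt_const _ _
  have h0 : gradCLM n p x = 0 := h1.unique h2
  have := congrArg (fun L : (Fin n → ℝ) →L[ℝ] ℝ => L (Pi.single i 1)) h0
  simp only [gradCLM_apply, ContinuousLinearMap.zero_apply] at this
  simpa [Pi.single_apply, Finset.sum_ite_eq] using this

/-- Let `V` and `W` be forms (homogeneous polynomials) on `ℝⁿ`, of possibly
different degrees. If `W` is positive definite, and `x ↦ ⟨∇W(x), ∇V(x)⟩` is positive definite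
(positive for all `x ≠ 0`), then `V` is positive definite. -/
theorem positivity_from_gradient_inner_product
    (n : ℕ) (V W : MvPolynomial (Fin n) ℝ) (dV dW : ℕ)
    (hVhom : V.IsHomogeneous dV) (hWhom : W.IsHomogeneous dW)
    (hWpos : ∀ x : Fin n → ℝ, x ≠ 0 → 0 < eval x W)
    (hinner : ∀ x : Fin n → ℝ, x ≠ 0 →
      0 < ∑ i : Fin n, eval x (pderiv i W) * eval x (pderiv i V)) :
    ∀ x : Fin n → ℝ, x ≠ 0 → 0 < eval x V := by
  intro x hx
  have hn : n ≠ 0 := by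
    rintro rfl
    exact hx (funext fun i => i.elim0)
  haveI : Nonempty (Fin n) := ⟨⟨0, Nat.pos_of_ne_zero hn⟩⟩
  have hcontW : Continuous (fun y : Fin n → ℝ => eval y W) :=
    continuous_iff_continuousAt.mpr fun y => (hasStrictFDerivAt_eval n W y).continuousAt
  have hcontV : Continuous (fun y : Fin n → ℝ => eval y V) :=
    continuous_iff_continuousAt.mpr fun y => (hasStrictFDerivAt_eval n V y).continuousAt
  -- degrees positive
  have hdW : dW ≠ 0 := by
    rintro rfl
    have h := hinner x hx
    have hz : ∀ i, eval x (pderiv i W) = 0 := fun i =>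
      pderiv_eval_eq_zero_of_homog_zero hWhom x i
    simp [hz] at h
  have hdV : dV ≠ 0 := by
    rintro rfl
    have h := hinner x hx
    have hz : ∀ i, eval x (pderiv i V) = 0 := fun i =>
      pderiv_eval_eq_zero_of_homog_zero hVhom x i
    simp [hz] at h
  have hdWpos : (0:ℝ) < dW := by exact_mod_cast Nat.pos_of_ne_zero hdW
  have hdVpos : (0:ℝ) < dV := by exact_mod_cast Nat.pos_of_ne_zero hdV
  -- eval 0 W = 0
  have hW0 : eval (0 : Fin n → ℝ) W = 0 := by
    have h := eval_smul_homog hWhom 0 x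
    simpa [zero_pow hdW] using h
  -- scaling onto level set
  have hscale : ∀ z : Fin n → ℝ, z ≠ 0 → ∃ t : ℝ, 0 < t ∧ eval (t • z) W = 1 := by
    intro z hz
    have hc : 0 < eval z W := hWpos z hz
    refine ⟨(eval z W) ^ (-(1:ℝ)/dW), Real.rpow_pos_of_pos hc _, ?_⟩
    rw [eval_smul_homog hWhom]
    rw [← Real.rpow_natCast ((eval z W) ^ (-(1:ℝ)/dW)) dW, ← Real.rpow_mul hc.le]
    have : (-(1:ℝ)/dW) * dW = -1 := by
      field_simp
    rw [this, Real.rpow_neg_one]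
    exact inv_mul_cancel₀ hc.ne'
  -- min of W on unit sphere
  have hSphc : IsCompact (Metric.sphere (0 : Fin n → ℝ) 1) := isCompact_sphere 0 1
  have hSphne : (Metric.sphere (0 : Fin n → ℝ) 1).Nonempty := by
    refine ⟨fun _ => 1, ?_⟩
    simp [Metric.mem_sphere, dist_zero_right]
  obtain ⟨u, huS, humin⟩ := hSphc.exists_isMinOn hSphne hcontW.continuousOn
  have hu0 : u ≠ 0 := by
    intro h
    rw [h] at huS
    simp at huS
  have hm : 0 < eval u W := hWpos u hu0
  set m := eval u W with hm_def
  -- the level set S is compact and nonempty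
  set S := {y : Fin n → ℝ | eval y W = 1} with hS_def
  have hSclosed : IsClosed S := isClosed_eq hcontW continuous_const
  have hSbdd : S ⊆ Metric.closedBall 0 (max 1 (1/m)) := by
    intro y hy
    have hyW : eval y W = 1 := hy
    have hy0 : y ≠ 0 := by
      intro h; rw [h, hW0] at hyW; norm_num at hyW
    have hr : 0 < ‖y‖ := norm_pos_iff.mpr hy0
    have hsph : (‖y‖⁻¹ • y) ∈ Metric.sphere (0 : Fin n → ℝ) 1 := by
      simp [norm_smul, abs_of_pos (inv_pos.mpr hr), inv_mul_cancel₀ hr.ne']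
    have hmle : m ≤ eval (‖y‖⁻¹ • y) W := humin hsph
    have hkey : 1 = ‖y‖ ^ dW * eval (‖y‖⁻¹ • y) W := by
      rw [← hyW]
      have := eval_smul_homog hWhom ‖y‖ (‖y‖⁻¹ • y)
      rw [smul_smul, mul_inv_cancel₀ hr.ne', one_smul] at this
      exact this
    have hpowpos : 0 < ‖y‖ ^ dW := pow_pos hr dW
    have h1 : ‖y‖ ^ dW * m ≤ 1 := by nlinarith
    rw [Metric.mem_closedBall, dist_zero_right]
    rcases le_or_gt ‖y‖ 1 with h | h
    · exact h.trans (le_max_left _ _)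
    · have h2 : ‖y‖ ≤ ‖y‖ ^ dW := by
        calc ‖y‖ = ‖y‖ ^ 1 := (pow_one _).symm
        _ ≤ ‖y‖ ^ dW := pow_le_pow_right₀ h.le (Nat.pos_of_ne_zero hdW)
      have : ‖y‖ * m ≤ 1 := by nlinarith
      have : ‖y‖ ≤ 1/m := by
        rw [le_div_iff₀ hm]; exact this
      exact this.trans (le_max_right _ _)
  have hScompact : IsCompact S :=
    Metric.isCompact_of_isClosed_isBounded hSclosed
      ((Metric.isBounded_closedBall).subset hSbdd)
  have hSne : S.Nonempty := by
    obtain ⟨t, _, ht⟩ := hscale x hx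
    exact ⟨t • x, ht⟩
  -- minimize V on S
  obtain ⟨x₀, hx₀S, hmin⟩ := hScompact.exists_isMinOn hSne hcontV.continuousOn
  have hx₀W : eval x₀ W = 1 := hx₀S
  have hx₀0 : x₀ ≠ 0 := by
    intro h; rw [h, hW0] at hx₀W; norm_num at hx₀W
  -- Lagrange multipliers
  have hextr : IsLocalExtrOn (fun y : Fin n → ℝ => eval y V)
      {y | eval y W = eval x₀ W} x₀ := by
    rw [hx₀W]
    exact hmin.isExtr.localize
  obtain ⟨a, b, hab, hsum⟩ := hextr.exists_multipliers_of_hasStrictFDerivAt_1d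
    (hasStrictFDerivAt_eval n W x₀) (hasStrictFDerivAt_eval n V x₀)
  have hcoord : ∀ i, a * eval x₀ (pderiv i W) + b * eval x₀ (pderiv i V) = 0 := by
    intro i
    have h := congrArg (fun L : (Fin n → ℝ) →L[ℝ] ℝ => L (Pi.single i 1)) hsum
    simp only [ContinuousLinearMap.add_apply, ContinuousLinearMap.smul_apply,
      ContinuousLinearMap.zero_apply, gradCLM_apply, smul_eq_mul] at h
    simpa [Pi.single_apply, mul_ite, mul_one, mul_zero, Finset.sum_ite_eq] using h
  have hpos := hinner x₀ hx₀0
  have hb : b ≠ 0 := by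
    rintro rfl
    have ha : a ≠ 0 := by
      intro h; exact hab (by simp [h])
    have hz : ∀ i, eval x₀ (pderiv i W) = 0 := by
      intro i
      have := hcoord i
      simp only [mul_zero, zero_mul, add_zero] at this
      exact (mul_eq_zero.mp this).resolve_left ha
    simp [hz] at hpos
  set lam := -(a/b) with hlam_def
  have hVi : ∀ i, eval x₀ (pderiv i V) = lam * eval x₀ (pderiv i W) := by
    intro i
    have h := hcoord i
    rw [hlam_def]
    field_simp
    linarith
  have hsumsq : 0 < lam * ∑ i : Fin n, eval x₀ (pderiv i W) ^ 2 := by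
    have : ∑ i : Fin n, eval x₀ (pderiv i W) * eval x₀ (pderiv i V)
        = lam * ∑ i : Fin n, eval x₀ (pderiv i W) ^ 2 := by
      rw [Finset.mul_sum]
      refine Finset.sum_congr rfl fun i _ => ?_
      rw [hVi i]; ring
    linarith [hpos.trans_eq this]
  have hsq : 0 ≤ ∑ i : Fin n, eval x₀ (pderiv i W) ^ 2 :=
    Finset.sum_nonneg fun i _ => sq_nonneg _
  have hlampos : 0 < lam := by nlinarith
  -- Euler identities
  have hEV := euler_identity hVhom x₀
  have hEW := euler_identity hWhom x₀
  have hkey : (dV:ℝ) * eval x₀ V = lam * ((dW:ℝ) * eval x₀ W) := by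
    rw [← hEV, ← hEW, Finset.mul_sum]
    refine Finset.sum_congr rfl fun i _ => ?_
    rw [hVi i]; ring
  rw [hx₀W, mul_one] at hkey
  have hVx₀ : 0 < eval x₀ V := by nlinarith
  -- conclude via scaling
  obtain ⟨t, ht, htW⟩ := hscale x hx
  have hle : eval x₀ V ≤ eval (t • x) V := hmin htW
  have hvt : eval (t • x) V = t ^ dV * eval x V := eval_smul_homog hVhom t x
  have htd : 0 < t ^ dV := pow_pos ht dV
  nlinarith
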